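/- Let p ∈ ℕ with p ≥ 1, ω > 0, and θ ∈ 𝒮(p,ω). Suppose ψ ∈ ℬ𝒫𝒞(θ) is an unpredictable function with values in ℝ^m, with unpredictability constant ε₀ > 0, number ν > 0 and sequences {μ_n}_{n∈ℕ}, {τ_n}_{n∈ℕ} both diverging to +∞ satisfying conditions (i)–(iii). Then for every c ∈ ℝ^m and every non-singular matrix Ω ∈ ℝ^{m×m}, the function ψ̃ defined by ψ̃(t) = Ωψ(t) + c belongs to ℬ𝒫𝒞(θ) and is unpredictable with the same ν and the same sequences {μ_n}, {τ_n}, and with unpredictability constant ε₀/‖Ω⁻¹‖, where ‖·‖ denotes the spectral norm. -/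
import Mathlib


open Filter Topology

noncomputable section

/-- `𝒮(p,ω)`: strictly increasing sequences `θ : ℤ → ℝ` with `|θ k| → ∞` as `|k| → ∞`
and `θ (k+p) = θ k + ω` for all `k`. -/
def SSeq (p : ℕ) (ω : ℝ) (θ : ℤ → ℝ) : Prop :=
  StrictMono θ ∧ Tendsto (fun k : ℤ => |θ k|) (cocompact ℤ) atTop ∧
    ∀ k : ℤ, θ (k + (p : ℤ)) = θ k + ω

/-- `ℬ𝒫𝒞(θ)`: bounded, continuous on each `(θ (k-1), θ k)`, right limits exist at each
`θ k`, and left-continuous at each `θ k`. -/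
def BPC (m : ℕ) (θ : ℤ → ℝ) (φ : ℝ → EuclideanSpace ℝ (Fin m)) : Prop :=
  (∃ M : ℝ, ∀ t : ℝ, ‖φ t‖ ≤ M) ∧
  (∀ k : ℤ, ContinuousOn φ (Set.Ioo (θ (k - 1)) (θ k))) ∧
  (∀ k : ℤ, ∃ L : EuclideanSpace ℝ (Fin m), Tendsto φ (nhdsWithin (θ k) (Set.Ioi (θ k))) (nhds L)) ∧
  (∀ k : ℤ, Tendsto φ (nhdsWithin (θ k) (Set.Iio (θ k))) (nhds (φ (θ k))))

/-- Conditions (i)–(iii) of Definition 2.1 with explicit data `ε₀, ν, μ, τ`. -/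
def UnpredictableWith (m : ℕ) (θ : ℤ → ℝ) (ψ : ℝ → EuclideanSpace ℝ (Fin m))
    (ε₀ ν : ℝ) (μ τ : ℕ → ℝ) : Prop :=
  0 < ε₀ ∧ 0 < ν ∧ Tendsto μ atTop atTop ∧ Tendsto τ atTop atTop ∧
  (∀ ε > (0 : ℝ), ∃ δ > (0 : ℝ), ∀ k : ℤ, ∀ s₁ ∈ Set.Ioo (θ (k - 1)) (θ k),
    ∀ s₂ ∈ Set.Ioo (θ (k - 1)) (θ k), |s₁ - s₂| < δ → ‖ψ s₁ - ψ s₂‖ < ε) ∧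
  (∀ C : Set ℝ, IsCompact C →
    TendstoUniformlyOn (fun n t => ψ (t + μ n)) ψ atTop C) ∧
  (∀ n : ℕ, ∀ t ∈ Set.Icc (τ n - ν) (τ n + ν), ε₀ ≤ ‖ψ (t + μ n) - ψ t‖)

/-- An unpredictable function in `ℬ𝒫𝒞(θ)`. -/
def Unpredictable (m : ℕ) (θ : ℤ → ℝ) (ψ : ℝ → EuclideanSpace ℝ (Fin m)) : Prop :=
  BPC m θ ψ ∧ ∃ ε₀ ν : ℝ, ∃ μ τ : ℕ → ℝ, UnpredictableWith m θ ψ ε₀ ν μ τ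

/-- An asymptotically unpredictable function in `ℬ𝒫𝒞(θ)`. -/
def AsympUnpredictable (m : ℕ) (θ : ℤ → ℝ) (φ : ℝ → EuclideanSpace ℝ (Fin m)) : Prop :=
  BPC m θ φ ∧ ∃ ψ ξ : ℝ → EuclideanSpace ℝ (Fin m),
    Unpredictable m θ ψ ∧ BPC m θ ξ ∧
    Tendsto (fun t => ‖ξ t‖) atTop (nhds (0 : ℝ)) ∧ ∀ t : ℝ, φ t = ψ t + ξ t

/-- if `ψ ∈ ℬ𝒫𝒞(θ)` is unpredictable with data `ε₀, ν, μ, τ`, then for every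
vector `c` and non-singular matrix `Ω`, the function `t ↦ Ω ψ t + c` belongs to `ℬ𝒫𝒞(θ)` and
is unpredictable with the same `ν, μ, τ` and unpredictability constant `ε₀ / ‖Ω⁻¹‖`
(spectral norm). -/
theorem statement1 (m p : ℕ) (hp : 1 ≤ p) (ω : ℝ) (hω : 0 < ω) (θ : ℤ → ℝ)
    (hθ : SSeq p ω θ) (ψ : ℝ → EuclideanSpace ℝ (Fin m)) (hψBPC : BPC m θ ψ)
    (ε₀ ν : ℝ) (μ τ : ℕ → ℝ) (hψ : UnpredictableWith m θ ψ ε₀ ν μ τ)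
    (c : EuclideanSpace ℝ (Fin m)) (Ω : Matrix (Fin m) (Fin m) ℝ) (hΩ : IsUnit Ω) :
    BPC m θ (fun t => Matrix.toEuclideanCLM (𝕜 := ℝ) Ω (ψ t) + c) ∧
    UnpredictableWith m θ (fun t => Matrix.toEuclideanCLM (𝕜 := ℝ) Ω (ψ t) + c)
      (ε₀ / ‖Matrix.toEuclideanCLM (𝕜 := ℝ) Ω⁻¹‖) ν μ τ := by
  obtain ⟨hε₀, hν, hμ, hτ, hcont, hunif, hsep⟩ := hψ
  set A := Matrix.toEuclideanCLM (𝕜 := ℝ) Ω with hA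
  set B := Matrix.toEuclideanCLM (𝕜 := ℝ) Ω⁻¹ with hB
  -- m = 0 is impossible
  rcases Nat.eq_zero_or_pos m with hm | hm
  · exfalso
    have h1 := hsep 0 (τ 0) ⟨by linarith, by linarith⟩
    have h2 : ψ (τ 0 + μ 0) - ψ (τ 0) = 0 := by
      subst hm
      exact Subsingleton.elim _ _
    rw [h2, norm_zero] at h1
    linarith
  haveI : Nonempty (Fin m) := ⟨⟨0, hm⟩⟩
  -- B ∘ A = id
  have hBA : ∀ x : EuclideanSpace ℝ (Fin m), B (A x) = x := by
    intro x
    have h : Ω⁻¹ * Ω = 1 := Matrix.nonsing_inv_mul Ω ((Matrix.isUnit_iff_isUnit_det Ω).mp hΩ)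
    have := congrArg (Matrix.toEuclideanCLM (𝕜 := ℝ)) h
    rw [map_mul, map_one] at this
    calc B (A x) = (B * A) x := rfl
    _ = x := by rw [hB, hA, this]; rfl
  have hBpos : 0 < ‖B‖ := by
    rw [norm_pos_iff]
    intro hB0
    obtain ⟨x, hx⟩ := exists_ne (0 : EuclideanSpace ℝ (Fin m))
    exact hx (by rw [← hBA x, hB0]; rfl)
  have hkey : ∀ x : EuclideanSpace ℝ (Fin m), ‖x‖ ≤ ‖B‖ * ‖A x‖ := fun x => by
    calc ‖x‖ = ‖B (A x)‖ := by rw [hBA]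
    _ ≤ ‖B‖ * ‖A x‖ := B.le_opNorm _
  have hAnn : 0 ≤ ‖A‖ := norm_nonneg _
  constructor
  · obtain ⟨⟨M, hM⟩, hc2, hc3, hc4⟩ := hψBPC
    refine ⟨⟨‖A‖ * M + ‖c‖, fun t => ?_⟩, fun k => ?_, fun k => ?_, fun k => ?_⟩
    · calc ‖A (ψ t) + c‖ ≤ ‖A (ψ t)‖ + ‖c‖ := norm_add_le _ _
      _ ≤ ‖A‖ * ‖ψ t‖ + ‖c‖ := by linarith [A.le_opNorm (ψ t)]
      _ ≤ ‖A‖ * M + ‖c‖ := by nlinarith [hM t, norm_nonneg (ψ t)]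
    · exact (A.continuous.comp_continuousOn (hc2 k)).add continuousOn_const
    · obtain ⟨L, hL⟩ := hc3 k
      exact ⟨A L + c, ((A.continuous.tendsto L).comp hL).add tendsto_const_nhds⟩
    · exact ((A.continuous.tendsto _).comp (hc4 k)).add tendsto_const_nhds
  · refine ⟨div_pos hε₀ hBpos, hν, hμ, hτ, ?_, ?_, ?_⟩
    · intro ε hε
      obtain ⟨δ, hδ, hδ'⟩ := hcont (ε / (‖A‖ + 1)) (by positivity)
      refine ⟨δ, hδ, fun k s₁ hs₁ s₂ hs₂ hss => ?_⟩
      have h1 := hδ' k s₁ hs₁ s₂ hs₂ hss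
      have h2 : (A (ψ s₁) + c) - (A (ψ s₂) + c) = A (ψ s₁ - ψ s₂) := by
        rw [map_sub]; abel
      rw [h2]
      have h3 := A.le_opNorm (ψ s₁ - ψ s₂)
      have h4 : ‖ψ s₁ - ψ s₂‖ * (‖A‖ + 1) < ε := by
        rw [← lt_div_iff₀ (by positivity)]; exact h1
      nlinarith [norm_nonneg (ψ s₁ - ψ s₂)]
    · intro C hC
      rw [Metric.tendstoUniformlyOn_iff]
      intro ε hε
      have h := (Metric.tendstoUniformlyOn_iff.mp (hunif C hC)) (ε / (‖A‖ + 1)) (by positivity)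
      filter_upwards [h] with n hn t ht
      have h1 := hn t ht
      rw [dist_eq_norm] at h1 ⊢
      have h2 : (A (ψ t) + c) - (A (ψ (t + μ n)) + c) = A (ψ t - ψ (t + μ n)) := by
        rw [map_sub]; abel
      rw [h2]
      have h3 := A.le_opNorm (ψ t - ψ (t + μ n))
      have h4 : ‖ψ t - ψ (t + μ n)‖ * (‖A‖ + 1) < ε := by
        rw [← lt_div_iff₀ (by positivity)]; exact h1
      nlinarith [norm_nonneg (ψ t - ψ (t + μ n))]
    · intro n t ht
      have h1 := hsep n t ht
      have h2 : (A (ψ (t + μ n)) + c) - (A (ψ t) + c) = A (ψ (t + μ n) - ψ t) := by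
        rw [map_sub]; abel
      rw [h2, div_le_iff₀ hBpos]
      calc ε₀ ≤ ‖ψ (t + μ n) - ψ t‖ := h1
      _ ≤ ‖B‖ * ‖A (ψ (t + μ n) - ψ t)‖ := hkey _
      _ = ‖A (ψ (t + μ n) - ψ t)‖ * ‖B‖ := mul_comm _ _
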